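/- For any V ∈ U(2), the 4×4 matrix botCNOT · topC-(XVX) · botCNOT equals the matrix with 1 in positions (1,1) and (4,4), V occupying the central 2×2 block (rows/columns 2,3), and zeros elsewhere. -/
import Mathlib


open Matrix Complex

def botCNOT : Matrix (Fin 4) (Fin 4) ℂ :=
  !![1, 0, 0, 0; 0, 0, 0, 1; 0, 0, 1, 0; 0, 1, 0, 0]

def PauliX : Matrix (Fin 2) (Fin 2) ℂ := !![0, 1; 1, 0]

/-- `topC W` is `W` controlled on the top qubit: `diag-block(1₂, W)`. -/
def topC (W : Matrix (Fin 2) (Fin 2) ℂ) : Matrix (Fin 4) (Fin 4) ℂ :=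
  !![1, 0, 0, 0; 0, 1, 0, 0; 0, 0, W 0 0, W 0 1; 0, 0, W 1 0, W 1 1]

theorem G23_implementation (V : Matrix (Fin 2) (Fin 2) ℂ)
    (hV : V ∈ Matrix.unitaryGroup (Fin 2) ℂ) :
    botCNOT * topC (PauliX * V * PauliX) * botCNOT
      = !![1, 0, 0, 0;
           0, V 0 0, V 0 1, 0;
           0, V 1 0, V 1 1, 0;
           0, 0, 0, 1] := by
  ext i j
  fin_cases i <;> fin_cases j <;>
    simp [Matrix.mul_apply, Fin.sum_univ_four, Fin.sum_univ_two, Matrix.vecMul,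
      dotProduct, Matrix.vecHead, Matrix.vecTail, botCNOT, topC, PauliX]
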